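/- (Atkinson) Let (A,R) be an associative unital Rota-Baxter algebra of weight 1, R̃ = id - R, and suppose b, b' ∈ A satisfy b = 1 - R(ba) and b' = 1 - R̃(ab'). Then b(1+a)b' = 1. -/
import Mathlib


/-- Atkinson's theorem: if `b = 1 - R(ba)` and `b' = 1 - R̃(ab')` with
`R̃ = id - R`, then `b(1+a)b' = 1`. -/
theorem stmt_17 {K : Type*} [Field K] [CharZero K] {A : Type*} [Ring A] [Algebra K A]
    (R : A →ₗ[K] A)
    (hRB : ∀ x y : A, R x * R y + R (x * y) = R (R x * y + x * R y))
    (a b b' : A)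
    (hb : b = 1 - R (b * a))
    (hb' : b' = 1 - (a * b' - R (a * b'))) :
    b * (1 + a) * b' = 1 := by
  have hRu : R (b * a) = 1 - b := by nth_rewrite 2 [hb]; abel
  have hRv : R (a * b') = b' - 1 + a * b' := by nth_rewrite 2 [hb']; abel
  have key := hRB (b * a) (a * b')
  have harg : R (b * a) * (a * b') + (b * a) * R (a * b')
      = a * b' - b * a + (b * a) * (a * b') := by
    rw [hRu, hRv]; noncomm_ring
  rw [harg, show a * b' - b * a + (b * a) * (a * b')
      = a * b' - b * a + (b * a) * (a * b') from rfl] at key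
  rw [map_add, map_sub] at key
  rw [hRu, hRv] at key
  -- key : (1 - b) * (b' - 1 + a*b') + R (b*a * (a*b')) = (b'-1+a*b') - (1-b) + R (b*a*(a*b'))
  linear_combination (norm := noncomm_ring) -key
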